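/- Let 0 < τ_1 ≤ ... ≤ τ_n and S > 0. Define g(j) = (∑_{i=1}^j 1/τ_i)^{-1} (S + j). If j* is any index achieving min_{j∈[n]} g(j), then τ_{j*} ≤ min_{j∈[n]} g(j). -/
import Mathlib


theorem tau_le_min_of_minimizer (n : ℕ) (hn : 1 ≤ n) (τ : ℕ → ℝ)
    (hpos : ∀ i ∈ Finset.Icc 1 n, 0 < τ i)
    (hmono : ∀ i j, 1 ≤ i → i ≤ j → j ≤ n → τ i ≤ τ j)
    (S : ℝ) (hS : 0 < S)
    (g : ℕ → ℝ) (hg : ∀ j, g j = (S + j) / ∑ i ∈ Finset.Icc 1 j, 1 / τ i)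
    (M : ℝ) (hM : M = (Finset.Icc 1 n).inf' (Finset.nonempty_Icc.mpr hn) g)
    (jstar : ℕ) (hjmem : jstar ∈ Finset.Icc 1 n) (hjmin : g jstar = M) :
    τ jstar ≤ M := by
  simp only [Finset.mem_Icc] at hjmem
  obtain ⟨hj1, hjn⟩ := hjmem
  have hτj : 0 < τ jstar := hpos jstar (Finset.mem_Icc.mpr ⟨hj1, hjn⟩)
  have hD : ∀ j, 1 ≤ j → j ≤ n → 0 < ∑ i ∈ Finset.Icc 1 j, 1 / τ i := by
    intro j h1 h2
    apply Finset.sum_pos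
    · intro i hi
      simp only [Finset.mem_Icc] at hi
      have := hpos i (Finset.mem_Icc.mpr ⟨hi.1, le_trans hi.2 h2⟩)
      positivity
    · exact Finset.nonempty_Icc.mpr h1
  have hDj : 0 < ∑ i ∈ Finset.Icc 1 jstar, 1 / τ i := hD jstar hj1 hjn
  rcases eq_or_lt_of_le hj1 with h1 | h2
  · subst hjmin
    rw [hg, ← h1]
    simp only [Finset.Icc_self, Finset.sum_singleton]
    have hτ1 : 0 < τ 1 := by rw [← h1] at hτj; exact hτj
    rw [one_div, le_div_iff₀ (by positivity)]
    rw [mul_inv_cancel₀ hτ1.ne']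
    push_cast
    linarith
  · obtain ⟨k, rfl⟩ : ∃ k, jstar = k + 1 := ⟨jstar - 1, by omega⟩
    have hk1 : 1 ≤ k := by omega
    have hkn : k ≤ n := by omega
    have hDk : 0 < ∑ i ∈ Finset.Icc 1 k, 1 / τ i := hD k hk1 hkn
    have hsplit : ∑ i ∈ Finset.Icc 1 (k+1), 1 / τ i
        = (∑ i ∈ Finset.Icc 1 k, 1 / τ i) + 1 / τ (k+1) :=
      Finset.sum_Icc_succ_top (by omega) _
    have hle : g (k+1) ≤ g k := by
      rw [hjmin, hM]
      exact Finset.inf'_le g (Finset.mem_Icc.mpr ⟨hk1, hkn⟩)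
    rw [hg, hg] at hle
    set Dk := ∑ i ∈ Finset.Icc 1 k, 1 / τ i with hDkdef
    rw [hsplit] at hle hDj
    have hcross : (S + ↑(k+1)) * Dk ≤ (S + ↑k) * (Dk + 1 / τ (k+1)) :=
      (div_le_div_iff₀ hDj hDk).mp hle
    rw [← hjmin, hg, hsplit, le_div_iff₀ hDj]
    have hinv : τ (k+1) * (1 / τ (k+1)) = 1 := by field_simp
    push_cast at hcross ⊢
    nlinarith [mul_pos hτj hDk]
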